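/- Let α ≥ 1 and δ ≥ 1, and let (U,d_U) be a finite ultrametric space that is an α-HST whose tree has degree at most δ. Then (U,d_U) admits a (⌈δ/2⌉, 1/α)-LSO. -/

import Mathlib

open scoped BigOperators

/-- `du` is an ultrametric distance function on `X`: a metric satisfying the
strong triangle inequality. -/
def UltrametricOn {X : Type*} (du : X → X → ℝ) : Prop :=
  (∀ x, du x x = 0) ∧ (∀ x y : X, x ≠ y → 0 < du x y) ∧
    (∀ x y : X, du x y = du y x) ∧
    ∀ x y z : X, du x z ≤ max (du x y) (du y z)

/-- The ultrametric `du` is a `k`-HST: distinct positive distance values are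
separated by a factor of `k`. -/
def IsHST {X : Type*} (du : X → X → ℝ) (k : ℝ) : Prop :=
  ∀ x y z : X, 0 < du x y → du x y < du x z → k * du x y ≤ du x z

/-- The tree of the ultrametric `du` has degree at most `δ`: for every `x` and
`r > 0`, the closed ball `{y : du x y ≤ r}` meets at most `δ` equivalence
classes of the relation `du (·,·) < r`. -/
def HSTDegreeLE {X : Type*} (du : X → X → ℝ) (δ : ℝ) : Prop :=
  ∀ (x : X) (r : ℝ), 0 < r → ∃ S : Finset X, (S.card : ℝ) ≤ δ ∧
    ∀ y : X, du x y ≤ r → ∃ z ∈ S, du y z < r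

/-- The ordering `σ` serves the pair `(x,y)` with stretch `ρ` (w.r.t. the
distance function `d`): `x ≺_σ y` and the points strictly between `x` and `y`
in `σ` split (at threshold `t`) into a prefix interval contained in
`B(x, ρ·d(x,y))` and a suffix interval contained in `B(y, ρ·d(x,y))`. -/
def LSOPair {X : Type*} (d : X → X → ℝ) (σ : X → ℝ) (ρ : ℝ) (x y : X) : Prop :=
  σ x < σ y ∧ ∃ t : ℝ, ∀ z : X, σ x < σ z → σ z < σ y →
    (σ z < t → d x z ≤ ρ * d x y) ∧ (t ≤ σ z → d y z ≤ ρ * d x y)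

/-- `(τ,ρ)`-LSO for `X` with distance function `d`: at most `τ` linear
orderings of `X` (each given by an injective real-valued function), such that
every pair is served by some ordering, possibly after swapping roles. -/
def IsLSO {X : Type*} (d : X → X → ℝ) (τ ρ : ℝ) : Prop :=
  ∃ s : ℕ, (s : ℝ) ≤ τ ∧ ∃ σ : Fin s → X → ℝ,
    (∀ i, Function.Injective (σ i)) ∧
    ∀ x y : X, x ≠ y → ∃ i, LSOPair d (σ i) ρ x y ∨ LSOPair d (σ i) ρ y x

lemma du_nonneg {X : Type*} (du : X → X → ℝ) (hu : UltrametricOn du) (x y : X) : 0 ≤ du x y := by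
  rcases eq_or_ne x y with rfl | h
  · rw [hu.1]
  · exact (hu.2.1 x y h).le

lemma hst_bound {X : Type*} (du : X → X → ℝ) (α : ℝ) (hα : 1 ≤ α)
    (hu : UltrametricOn du) (hhst : IsHST du α) (x z y : X) (h : du x z < du x y) :
    du x z ≤ 1/α * du x y := by
  have hα0 : (0:ℝ) < α := lt_of_lt_of_le one_pos hα
  rcases eq_or_ne x z with rfl | hne
  · rw [hu.1]
    exact mul_nonneg (by positivity) (du_nonneg du hu x y)
  · have h1 : 0 < du x z := hu.2.1 x z hne
    have h2 := hhst x z y h1 h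
    have key := mul_le_mul_of_nonneg_left h2 (le_of_lt (by positivity : (0:ℝ) < 1/α))
    rwa [← mul_assoc, one_div_mul_cancel (ne_of_gt hα0), one_mul] at key

noncomputable def classIdx {X : Type*} [DecidableEq X] (B : Finset (Finset X)) (c : Finset X) : ℕ :=
  if h : c ∈ B then ((B.equivFin ⟨c, h⟩ : Fin B.card) : ℕ) else 0

lemma classIdx_lt {X : Type*} [DecidableEq X] (B : Finset (Finset X)) (c : Finset X)
    (h : c ∈ B) : classIdx B c < B.card := by
  rw [classIdx, dif_pos h]
  exact (B.equivFin ⟨c, h⟩).isLt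

lemma classIdx_inj {X : Type*} [DecidableEq X] (B : Finset (Finset X)) {c d : Finset X}
    (hc : c ∈ B) (hd : d ∈ B) (h : classIdx B c = classIdx B d) : c = d := by
  rw [classIdx, dif_pos hc, classIdx, dif_pos hd] at h
  have h2 : (⟨c, hc⟩ : {x // x ∈ B}) = ⟨d, hd⟩ := B.equivFin.injective (Fin.ext h)
  exact congrArg Subtype.val h2

/-- `zw s j v` : the "shifted residue" of class index `v` under shift `j`. -/
def zw (s j v : ℕ) : ℕ := (v + 2*s - j) % (2*s)

/-- Position of class `v` in the `j`-th zig-zag ordering of `Fin (2*s)`. -/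
def zpos (s j v : ℕ) : ℕ :=
  if zw s j v = 0 then 0 else if zw s j v ≤ s then 2*(zw s j v) - 1 else 2*(2*s - zw s j v)

lemma zw_eq (s j v w : ℕ) (hw : w < 2*s)
    (h : v + 2*s - j = w ∨ v + 2*s - j = w + 2*s ∨ v + 2*s - j = w + 2*(2*s)) :
    zw s j v = w := by
  unfold zw
  rcases h with h | h | h <;> rw [h]
  · exact Nat.mod_eq_of_lt hw
  · rw [Nat.add_mod_right]; exact Nat.mod_eq_of_lt hw
  · rw [show w + 2*(2*s) = w + 2*s + 2*s by ring, Nat.add_mod_right, Nat.add_mod_right]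
    exact Nat.mod_eq_of_lt hw

lemma zw_lt (s j v : ℕ) (hs : 1 ≤ s) : zw s j v < 2*s := Nat.mod_lt _ (by omega)

lemma zpos_lt (s j v : ℕ) (hs : 1 ≤ s) : zpos s j v < 2*s := by
  have h := zw_lt s j v hs
  unfold zpos; split_ifs <;> first | contradiction | omega

lemma two_mod (x n : ℕ) (hn : 0 < n) (hx : x < 2*n) : x % n = x ∨ (n ≤ x ∧ x % n = x - n) := by
  rcases Nat.lt_or_ge x n with h | h
  · exact Or.inl (Nat.mod_eq_of_lt h)
  · right
    refine ⟨h, ?_⟩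
    rw [Nat.mod_eq_sub_mod h, Nat.mod_eq_of_lt (by omega)]

lemma zpos_inj (s j u v : ℕ) (hs : 1 ≤ s) (hj : j < s) (hu : u < 2*s) (hv : v < 2*s)
    (h : zpos s j u = zpos s j v) : u = v := by
  have h1 := two_mod (u + 2*s - j) (2*s) (by omega) (by omega)
  have h2 := two_mod (v + 2*s - j) (2*s) (by omega) (by omega)
  have h3 := zw_lt s j u hs
  have h4 := zw_lt s j v hs
  unfold zpos at h
  unfold zw at *
  split_ifs at h <;> omega

lemma zpos_cover (s : ℕ) (hs : 1 ≤ s) (u v : ℕ) (hu : u < 2*s) (hv : v < 2*s) (huv : u ≠ v) :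
    ∃ j, j < s ∧ (zpos s j u + 1 = zpos s j v ∨ zpos s j v + 1 = zpos s j u) := by
  -- reduce to the case u < v
  suffices H : ∀ u v : ℕ, u < 2*s → v < 2*s → u < v →
      ∃ j, j < s ∧ (zpos s j u + 1 = zpos s j v ∨ zpos s j v + 1 = zpos s j u) by
    rcases Nat.lt_or_ge u v with h | h
    · exact H u v hu hv h
    · obtain ⟨j, hj, hc⟩ := H v u hv hu (by omega)
      exact ⟨j, hj, hc.symm⟩
  clear hu hv huv u v
  intro u v hu hv huv
  rcases Nat.even_or_odd (v - u) with ⟨e, he⟩ | ⟨i, hi⟩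
  · -- even case: v - u = e + e, 1 ≤ e ≤ s-1 ; q := s - e
    have he1 : 1 ≤ e := by omega
    have he2 : e ≤ s - 1 := by omega
    have hj0a := two_mod (u + 2*s - (s - e)) (2*s) (by omega) (by omega)
    have hj0b : (u + 2*s - (s - e)) % (2*s) < 2*s := Nat.mod_lt _ (by omega)
    generalize hg : (u + 2*s - (s - e)) % (2*s) = j0 at hj0a hj0b
    by_cases hlt : j0 < s
    · refine ⟨j0, hlt, Or.inl ?_⟩
      have hwu : zw s j0 u = s - e := zw_eq s j0 u (s - e) (by omega) (by omega)
      have hwv : zw s j0 v = 2*s - (s - e) := zw_eq s j0 v (2*s - (s - e)) (by omega) (by omega)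
      unfold zpos
      rw [hwu, hwv]
      split_ifs <;> first | contradiction | omega
    · refine ⟨j0 - s, by omega, Or.inr ?_⟩
      have hwu : zw s (j0 - s) u = (s - e) + s := zw_eq s (j0 - s) u ((s - e) + s) (by omega) (by omega)
      have hwv : zw s (j0 - s) v = s - (s - e) := zw_eq s (j0 - s) v (s - (s - e)) (by omega) (by omega)
      unfold zpos
      rw [hwu, hwv]
      split_ifs <;> first | contradiction | omega
  · -- odd case: v - u = 2*i + 1, 0 ≤ i ≤ s-1
    have hi2 : i ≤ s - 1 := by omega
    have hj0a := two_mod (u + i) (2*s) (by omega) (by omega)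
    have hj0b : (u + i) % (2*s) < 2*s := Nat.mod_lt _ (by omega)
    generalize hg : (u + i) % (2*s) = j0 at hj0a hj0b
    by_cases hiz : i = 0
    · subst hiz
      by_cases hlt : j0 < s
      · refine ⟨j0, hlt, Or.inl ?_⟩
        have hwu : zw s j0 u = 0 := zw_eq s j0 u 0 (by omega) (by omega)
        have hwv : zw s j0 v = 1 := zw_eq s j0 v 1 (by omega) (by omega)
        unfold zpos
        rw [hwu, hwv]
        split_ifs <;> first | contradiction | omega
      · have hs2 : 2 ≤ s := by omega
        refine ⟨j0 - s, by omega, Or.inr ?_⟩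
        have hwu : zw s (j0 - s) u = s := zw_eq s (j0 - s) u s (by omega) (by omega)
        have hwv : zw s (j0 - s) v = s + 1 := zw_eq s (j0 - s) v (s + 1) (by omega) (by omega)
        unfold zpos
        rw [hwu, hwv]
        split_ifs <;> first | contradiction | omega
    · have hi1 : 1 ≤ i := by omega
      by_cases hlt : j0 < s
      · refine ⟨j0, hlt, Or.inl ?_⟩
        have hwu : zw s j0 u = 2*s - i := zw_eq s j0 u (2*s - i) (by omega) (by omega)
        have hwv : zw s j0 v = i + 1 := zw_eq s j0 v (i + 1) (by omega) (by omega)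
        unfold zpos
        rw [hwu, hwv]
        split_ifs <;> first | contradiction | omega
      · by_cases his : i = s - 1
        · refine ⟨j0 - s, by omega, Or.inr ?_⟩
          have hwu : zw s (j0 - s) u = s - i := zw_eq s (j0 - s) u (s - i) (by omega) (by omega)
          have hwv : zw s (j0 - s) v = 0 := zw_eq s (j0 - s) v 0 (by omega) (by omega)
          unfold zpos
          rw [hwu, hwv]
          split_ifs <;> first | contradiction | omega
        · refine ⟨j0 - s, by omega, Or.inr ?_⟩
          have hwu : zw s (j0 - s) u = s - i := zw_eq s (j0 - s) u (s - i) (by omega) (by omega)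
          have hwv : zw s (j0 - s) v = s + i + 1 := zw_eq s (j0 - s) v (s + i + 1) (by omega) (by omega)
          unfold zpos
          rw [hwu, hwv]
          split_ifs <;> first | contradiction | omega

lemma lso_aux (X : Type) [Fintype X] (du : X → X → ℝ) (α δ : ℝ)
    (hα : 1 ≤ α) (hu : UltrametricOn du) (hhst : IsHST du α) (hdeg : HSTDegreeLE du δ)
    (s : ℕ) (hs : 1 ≤ s) (hδs : δ ≤ 2*(s:ℝ)) :
    ∀ (n : ℕ) (A : Finset X), A.card ≤ n →
      ∃ σ : Fin s → X → ℝ,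
        (∀ i, Set.InjOn (σ i) ↑A) ∧
        (∀ (i : Fin s), ∀ x ∈ A, 0 ≤ σ i x ∧ σ i x < 1) ∧
        (∀ x ∈ A, ∀ y ∈ A, x ≠ y → ∃ i : Fin s,
          (σ i x < σ i y ∧ ∃ t : ℝ, ∀ z ∈ A, σ i x < σ i z → σ i z < σ i y →
            (σ i z < t → du x z ≤ 1/α * du x y) ∧ (t ≤ σ i z → du y z ≤ 1/α * du x y)) ∨
          (σ i y < σ i x ∧ ∃ t : ℝ, ∀ z ∈ A, σ i y < σ i z → σ i z < σ i x →
            (σ i z < t → du y z ≤ 1/α * du y x) ∧ (t ≤ σ i z → du x z ≤ 1/α * du y x))) := by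
  classical
  have hsmall : ∀ A : Finset X, A.card ≤ 1 →
      ∃ σ : Fin s → X → ℝ,
        (∀ i, Set.InjOn (σ i) ↑A) ∧
        (∀ (i : Fin s), ∀ x ∈ A, 0 ≤ σ i x ∧ σ i x < 1) ∧
        (∀ x ∈ A, ∀ y ∈ A, x ≠ y → ∃ i : Fin s,
          (σ i x < σ i y ∧ ∃ t : ℝ, ∀ z ∈ A, σ i x < σ i z → σ i z < σ i y →
            (σ i z < t → du x z ≤ 1/α * du x y) ∧ (t ≤ σ i z → du y z ≤ 1/α * du x y)) ∨
          (σ i y < σ i x ∧ ∃ t : ℝ, ∀ z ∈ A, σ i y < σ i z → σ i z < σ i x →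
            (σ i z < t → du y z ≤ 1/α * du y x) ∧ (t ≤ σ i z → du x z ≤ 1/α * du y x))) := by
    intro A hA
    refine ⟨fun _ _ => 0, ?_, ?_, ?_⟩
    · intro i a ha b hb _
      exact Finset.card_le_one.mp hA a ha b hb
    · intro i x _
      norm_num
    · intro x hx y hy hxy
      exact absurd (Finset.card_le_one.mp hA x hx y hy) hxy
  intro n
  induction n with
  | zero => intro A hA; exact hsmall A (by omega)
  | succ n IH =>
    intro A hA
    by_cases h1 : A.card ≤ 1
    · exact hsmall A h1
    push_neg at h1
    have hAne : A.Nonempty := Finset.card_pos.mp (by omega)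
    have hne : (A ×ˢ A).Nonempty := hAne.product hAne
    set r := (A ×ˢ A).sup' hne (fun p => du p.1 p.2) with hrdef
    have hr_le : ∀ x ∈ A, ∀ y ∈ A, du x y ≤ r := by
      intro x hx y hy
      exact Finset.le_sup' (f := fun p : X × X => du p.1 p.2) (b := (x, y)) (Finset.mem_product.mpr ⟨hx, hy⟩)
    obtain ⟨p, hpmem, hpr⟩ := Finset.exists_mem_eq_sup' hne (fun p : X × X => du p.1 p.2)
    have hp1 : p.1 ∈ A := (Finset.mem_product.mp hpmem).1
    have hp2 : p.2 ∈ A := (Finset.mem_product.mp hpmem).2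
    have hr_pos : 0 < r := by
      obtain ⟨a, ha, b, hb, hab⟩ := Finset.one_lt_card.mp h1
      exact lt_of_lt_of_le (hu.2.1 a b hab) (hr_le a ha b hb)
    -- equivalence classes of `du _ _ < r`
    set C : X → Finset X := fun x => A.filter (fun y => du x y < r) with hCdef
    have hmemC : ∀ z x : X, z ∈ C x ↔ z ∈ A ∧ du x z < r := by
      intro z x
      rw [hCdef]
      simp [Finset.mem_filter]
    have hxC : ∀ x ∈ A, x ∈ C x := fun x hx => (hmemC x x).mpr ⟨hx, by rw [hu.1]; exact hr_pos⟩
    have hCeq : ∀ x ∈ A, ∀ y ∈ A, du x y < r → C x = C y := by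
      intro x hx y hy hxy
      ext z
      rw [hmemC, hmemC]
      constructor
      · rintro ⟨hz, hxz⟩
        refine ⟨hz, lt_of_le_of_lt (hu.2.2.2 y x z) (max_lt ?_ hxz)⟩
        rw [hu.2.2.1 y x]; exact hxy
      · rintro ⟨hz, hyz⟩
        refine ⟨hz, lt_of_le_of_lt (hu.2.2.2 x y z) (max_lt hxy hyz)⟩
    have hCcard : ∀ x ∈ A, (C x).card ≤ n := by
      intro x hx
      have hne2 : C x ≠ A := by
        intro hCA
        have h1' : p.1 ∈ C x := by rw [hCA]; exact hp1
        have h2' : p.2 ∈ C x := by rw [hCA]; exact hp2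
        have e1 := ((hmemC p.1 x).mp h1').2
        have e2 := ((hmemC p.2 x).mp h2').2
        have hlt : du p.1 p.2 < r := by
          refine lt_of_le_of_lt (hu.2.2.2 p.1 x p.2) (max_lt ?_ e2)
          rw [hu.2.2.1 p.1 x]; exact e1
        rw [← hpr] at hlt
        exact lt_irrefl _ hlt
      have hss : C x ⊂ A := ssubset_of_subset_of_ne (Finset.filter_subset _ _) hne2
      have := Finset.card_lt_card hss
      omega
    -- the set of classes, and the degree bound
    set B := A.image C with hBdef
    have hCB : ∀ x ∈ A, C x ∈ B := fun x hx => Finset.mem_image_of_mem C hx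
    obtain ⟨x₀, hx₀⟩ := hAne
    obtain ⟨S, hS1, hS2⟩ := hdeg x₀ r hr_pos
    have key : ∀ c ∈ B, ∃ z, z ∈ S ∧ ∃ x, x ∈ A ∧ C x = c ∧ du x z < r := by
      intro c hc
      obtain ⟨x, hx, hcx⟩ := Finset.mem_image.mp hc
      obtain ⟨z, hzS, hz⟩ := hS2 x (hr_le x₀ hx₀ x hx)
      exact ⟨z, hzS, x, hx, hcx, hz⟩
    have hXne : Nonempty X := ⟨x₀⟩
    choose! g hg1 hg2 using key
    have hBcard : B.card ≤ S.card := by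
      apply Finset.card_le_card_of_injOn g (fun c hc => hg1 c hc)
      intro c1 hc1 c2 hc2 hgeq
      obtain ⟨x1, hx1, hcx1, hdx1⟩ := hg2 c1 hc1
      obtain ⟨x2, hx2, hcx2, hdx2⟩ := hg2 c2 hc2
      rw [hgeq] at hdx1
      have hlt : du x1 x2 < r := by
        refine lt_of_le_of_lt (hu.2.2.2 x1 (g c2) x2) (max_lt hdx1 ?_)
        rw [hu.2.2.1 (g c2) x2]; exact hdx2
      rw [← hcx1, ← hcx2]
      exact hCeq x1 hx1 x2 hx2 hlt
    have hB2s : B.card ≤ 2*s := by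
      have h2 : (B.card : ℝ) ≤ δ := le_trans (Nat.cast_le.mpr hBcard) hS1
      have h3 : (B.card : ℝ) ≤ 2*(s:ℝ) := le_trans h2 hδs
      exact_mod_cast h3
    -- recursive orderings for each class
    choose! F hF1 hF2 hF3 using IH
    -- class index
    set ν : X → ℕ := fun x => classIdx B (C x) with hνdef
    have hν_lt : ∀ x ∈ A, ν x < 2*s :=
      fun x hx => lt_of_lt_of_le (classIdx_lt B (C x) (hCB x hx)) hB2s
    have hν_inj : ∀ x ∈ A, ∀ y ∈ A, ν x = ν y → C x = C y :=
      fun x hx y hy h => classIdx_inj B (hCB x hx) (hCB y hy) h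
    -- the combined orderings
    set D : ℝ := ((2*s : ℕ) : ℝ) with hDdef
    have hD : (0:ℝ) < D := by rw [hDdef]; exact_mod_cast (by omega : 0 < 2*s)
    set σ : Fin s → X → ℝ := fun i x => ((zpos s i (ν x) : ℝ) + F (C x) i x) / D with hσdef
    have hσ : ∀ (i : Fin s) (x : X), σ i x = ((zpos s i (ν x) : ℝ) + F (C x) i x) / D :=
      fun _ _ => rfl
    have hdivlt : ∀ a b : ℝ, a / D < b / D ↔ a < b := by
      intro a b
      rw [div_lt_div_iff₀ hD hD, mul_lt_mul_iff_of_pos_right hD]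
    have hdivle : ∀ a b : ℝ, a / D ≤ b / D ↔ a ≤ b := by
      intro a b
      rw [div_le_div_iff₀ hD hD, mul_le_mul_iff_of_pos_right hD]
    have hFb : ∀ x ∈ A, ∀ i : Fin s, 0 ≤ F (C x) i x ∧ F (C x) i x < 1 :=
      fun x hx i => hF2 (C x) (hCcard x hx) i x (hxC x hx)
    have hcmp : ∀ (i : Fin s) (x y : X),
        (σ i x < σ i y ↔ (zpos s i (ν x) : ℝ) + F (C x) i x < (zpos s i (ν y) : ℝ) + F (C y) i y) := by
      intro i x y
      rw [hσ, hσ]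
      exact hdivlt _ _
    have hposle : ∀ (i : Fin s) (x z : X), x ∈ A → z ∈ A → σ i x < σ i z →
        zpos s i (ν x) ≤ zpos s i (ν z) := by
      intro i x z hx hz h
      have h' := (hcmp i x z).mp h
      have h1 : (zpos s i (ν x) : ℝ) < (zpos s i (ν z) : ℝ) + 1 := by
        have b1 := (hFb x hx i).1
        have b2 := (hFb z hz i).2
        linarith
      have h2 : zpos s i (ν x) < zpos s i (ν z) + 1 := by exact_mod_cast h1
      omega
    refine ⟨σ, ?_, ?_, ?_⟩
    · -- injectivity
      intro i x hx y hy heq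
      have hx' : x ∈ A := hx
      have hy' : y ∈ A := hy
      have hnum : (zpos s i (ν x) : ℝ) + F (C x) i x = (zpos s i (ν y) : ℝ) + F (C y) i y := by
        have h' := congrArg (fun w : ℝ => w * D) heq
        simp only [hσ] at h'
        rwa [div_mul_cancel₀ _ (ne_of_gt hD), div_mul_cancel₀ _ (ne_of_gt hD)] at h'
      have hFx := hFb x hx' i
      have hFy := hFb y hy' i
      have hpp : zpos s i (ν x) = zpos s i (ν y) := by
        have h1 : (zpos s i (ν x) : ℝ) < (zpos s i (ν y) : ℝ) + 1 := by linarith [hFx.1, hFx.2, hFy.1, hFy.2]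
        have h2 : (zpos s i (ν y) : ℝ) < (zpos s i (ν x) : ℝ) + 1 := by linarith [hFx.1, hFx.2, hFy.1, hFy.2]
        have h1' : zpos s i (ν x) < zpos s i (ν y) + 1 := by exact_mod_cast h1
        have h2' : zpos s i (ν y) < zpos s i (ν x) + 1 := by exact_mod_cast h2
        omega
      have hCeq' : C x = C y :=
        hν_inj x hx' y hy' (zpos_inj s i (ν x) (ν y) hs i.isLt (hν_lt x hx') (hν_lt y hy') hpp)
      have hFeq : F (C x) i x = F (C x) i y := by
        have hcast : (zpos s i (ν x) : ℝ) = (zpos s i (ν y) : ℝ) := by exact_mod_cast hpp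
        rw [← hCeq'] at hnum
        linarith
      exact hF1 (C x) (hCcard x hx') i (hxC x hx') (by rw [hCeq']; exact Finset.mem_coe.mpr (hxC y hy')) hFeq
    · -- bounds
      intro i x hx
      have hFx := hFb x hx i
      have hz := zpos_lt s i (ν x) hs
      constructor
      · rw [hσ]
        exact div_nonneg (add_nonneg (Nat.cast_nonneg _) hFx.1) hD.le
      · rw [hσ, div_lt_one hD]
        have hc : (zpos s i (ν x) : ℝ) + 1 ≤ D := by
          rw [hDdef]
          exact_mod_cast hz
        linarith [hFx.2]
    · -- the pair condition
      -- transfer lemma for pairs inside one class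
      have transfer : ∀ x y : X, x ∈ A → y ∈ A → ∀ i : Fin s,
          (F (C x) i x < F (C x) i y ∧ ∃ t' : ℝ, ∀ z ∈ C x,
              F (C x) i x < F (C x) i z → F (C x) i z < F (C x) i y →
            (F (C x) i z < t' → du x z ≤ 1/α * du x y) ∧
            (t' ≤ F (C x) i z → du y z ≤ 1/α * du x y)) →
          C x = C y →
          (σ i x < σ i y ∧ ∃ t : ℝ, ∀ z ∈ A, σ i x < σ i z → σ i z < σ i y →
            (σ i z < t → du x z ≤ 1/α * du x y) ∧ (t ≤ σ i z → du y z ≤ 1/α * du x y)) := by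
        intro x y hx hy i hin hCxy
        obtain ⟨hlt', t', ht'⟩ := hin
        have hννs : ν x = ν y := congrArg (classIdx B) hCxy
        have hpyx : zpos s i (ν y) = zpos s i (ν x) := by rw [hννs]
        constructor
        · apply (hcmp i x y).mpr
          rw [hpyx, ← hCxy]
          linarith [hlt']
        · refine ⟨((zpos s i (ν x) : ℝ) + t') / D, ?_⟩
          intro z hz hz1 hz2
          have hle1 := hposle i x z hx hz hz1
          have hle2 := hposle i z y hz hy hz2
          have hpz : zpos s i (ν z) = zpos s i (ν x) := by omega
          have hCz : C z = C x :=
            hν_inj z hz x hx (zpos_inj s i (ν z) (ν x) hs i.isLt (hν_lt z hz) (hν_lt x hx) hpz)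
          have hzCx : z ∈ C x := by rw [← hCz]; exact hxC z hz
          have hin1 : F (C x) i x < F (C x) i z := by
            have h' := (hcmp i x z).mp hz1
            rw [hpz, hCz] at h'
            linarith
          have hin2 : F (C x) i z < F (C x) i y := by
            have h' := (hcmp i z y).mp hz2
            rw [hpz, hpyx, hCz, ← hCxy] at h'
            linarith
          obtain ⟨hA', hB'⟩ := ht' z hzCx hin1 hin2
          constructor
          · intro hless
            apply hA'
            rw [hσ] at hless
            have h' := (hdivlt _ _).mp hless
            rw [hpz, hCz] at h'
            linarith
          · intro hge
            apply hB'
            rw [hσ] at hge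
            have h' := (hdivle _ _).mp hge
            rw [hpz, hCz] at h'
            linarith
      -- cross lemma for pairs in different classes
      have cross : ∀ x y : X, x ∈ A → y ∈ A → du x y = r → ∀ (j : ℕ) (hj : j < s),
          zpos s j (ν x) + 1 = zpos s j (ν y) →
          (σ ⟨j, hj⟩ x < σ ⟨j, hj⟩ y ∧ ∃ t : ℝ, ∀ z ∈ A,
              σ ⟨j, hj⟩ x < σ ⟨j, hj⟩ z → σ ⟨j, hj⟩ z < σ ⟨j, hj⟩ y →
            (σ ⟨j, hj⟩ z < t → du x z ≤ 1/α * du x y) ∧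
            (t ≤ σ ⟨j, hj⟩ z → du y z ≤ 1/α * du x y)) := by
        intro x y hx hy hrxy j hj hadj
        set i : Fin s := ⟨j, hj⟩ with hidef
        have hival : (i : ℕ) = j := rfl
        have hFbx := hFb x hx i
        have hFby := hFb y hy i
        have hcadj : (zpos s j (ν x) : ℝ) + 1 = (zpos s j (ν y) : ℝ) := by exact_mod_cast hadj
        constructor
        · apply (hcmp i x y).mpr
          rw [hival]
          linarith [hFbx.2, hFby.1]
        · refine ⟨(zpos s j (ν y) : ℝ) / D, ?_⟩
          intro z hz hz1 hz2
          have hle1 := hposle i x z hx hz hz1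
          have hle2 := hposle i z y hz hy hz2
          rw [hival] at hle1 hle2
          have hFbz := hFb z hz i
          constructor
          · intro hless
            rw [hσ, hival] at hless
            have h' := (hdivlt _ _).mp hless
            have hzlt : zpos s j (ν z) < zpos s j (ν y) := by
              have hq : (zpos s j (ν z) : ℝ) < (zpos s j (ν y) : ℝ) := by linarith [hFbz.1]
              exact_mod_cast hq
            have hpzx : zpos s j (ν z) = zpos s j (ν x) := by omega
            have hCzx : C z = C x :=
              hν_inj z hz x hx (zpos_inj s j (ν z) (ν x) hs hj (hν_lt z hz) (hν_lt x hx) hpzx)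
            have hmem : z ∈ C x := by rw [← hCzx]; exact hxC z hz
            have hdzx : du x z < r := ((hmemC z x).mp hmem).2
            have hlt2 : du x z < du x y := by rw [hrxy]; exact hdzx
            exact hst_bound du α hα hu hhst x z y hlt2
          · intro hge
            rw [hσ, hival] at hge
            have h' := (hdivle _ _).mp hge
            have hzge : zpos s j (ν y) ≤ zpos s j (ν z) := by
              have hq : (zpos s j (ν y) : ℝ) < (zpos s j (ν z) : ℝ) + 1 := by linarith [hFbz.2]
              have hq' : zpos s j (ν y) < zpos s j (ν z) + 1 := by exact_mod_cast hq
              omega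
            have hpzy : zpos s j (ν z) = zpos s j (ν y) := by omega
            have hCzy : C z = C y :=
              hν_inj z hz y hy (zpos_inj s j (ν z) (ν y) hs hj (hν_lt z hz) (hν_lt y hy) hpzy)
            have hmem : z ∈ C y := by rw [← hCzy]; exact hxC z hz
            have hdzy : du y z < r := ((hmemC z y).mp hmem).2
            have hlt2 : du y z < du y x := by rw [hu.2.2.1 y x, hrxy]; exact hdzy
            have hres := hst_bound du α hα hu hhst y z x hlt2
            rwa [hu.2.2.1 y x] at hres
      intro x hx y hy hxy
      by_cases hsame : du x y < r
      · have hCxy : C x = C y := hCeq x hx y hy hsame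
        obtain ⟨i, hi⟩ := hF3 (C x) (hCcard x hx) x (hxC x hx) y (by rw [hCxy]; exact hxC y hy) hxy
        rcases hi with h | h
        · exact ⟨i, Or.inl (transfer x y hx hy i h hCxy)⟩
        · rw [hCxy] at h
          exact ⟨i, Or.inr (transfer y x hy hx i h hCxy.symm)⟩
      · have hrxy : du x y = r := le_antisymm (hr_le x hx y hy) (not_lt.mp hsame)
        have hνne : ν x ≠ ν y := by
          intro h
          have hCxy := hν_inj x hx y hy h
          have : y ∈ C x := by rw [hCxy]; exact hxC y hy
          exact hsame ((hmemC y x).mp this).2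
        obtain ⟨j, hj, hc⟩ := zpos_cover s hs (ν x) (ν y) (hν_lt x hx) (hν_lt y hy) hνne
        rcases hc with h | h
        · exact ⟨⟨j, hj⟩, Or.inl (cross x y hx hy hrxy j hj h)⟩
        · exact ⟨⟨j, hj⟩, Or.inr (cross y x hy hx (by rw [hu.2.2.1 y x]; exact hrxy) j hj h)⟩


/-- Every finite `α`-HST whose tree has degree at most `δ` admits a
`(⌈δ/2⌉, 1/α)`-LSO. -/
theorem hst_admits_LSO
    (X : Type) [Fintype X] (du : X → X → ℝ) (α δ : ℝ)
    (hα : 1 ≤ α) (hδ : 1 ≤ δ)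
    (hu : UltrametricOn du) (hhst : IsHST du α) (hdeg : HSTDegreeLE du δ) :
    IsLSO du ((⌈δ / 2⌉₊ : ℝ)) (1 / α) := by
  classical
  set s := ⌈δ / 2⌉₊ with hsdef
  have hspos : 1 ≤ s := by
    rw [hsdef]
    have h0 : (0:ℝ) < δ / 2 := by linarith
    exact Nat.ceil_pos.mpr h0
  have hδs : δ ≤ 2*(s:ℝ) := by
    have h := Nat.le_ceil (δ/2)
    have h' : δ / 2 ≤ (s : ℝ) := by rw [hsdef]; exact_mod_cast h
    linarith
  obtain ⟨σ, hinj, hbnd, hpair⟩ :=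
    lso_aux X du α δ hα hu hhst hdeg s hspos hδs (Finset.univ.card) Finset.univ le_rfl
  refine ⟨s, le_refl _, σ, ?_, ?_⟩
  · intro i
    have h := hinj i
    rw [Finset.coe_univ] at h
    exact fun a b hab => h (Set.mem_univ a) (Set.mem_univ b) hab
  · intro x y hxy
    obtain ⟨i, h⟩ := hpair x (Finset.mem_univ x) y (Finset.mem_univ y) hxy
    refine ⟨i, ?_⟩
    unfold LSOPair
    rcases h with ⟨h1, t, ht⟩ | ⟨h1, t, ht⟩
    · exact Or.inl ⟨h1, t, fun z hz1 hz2 => ht z (Finset.mem_univ z) hz1 hz2⟩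
    · exact Or.inr ⟨h1, t, fun z hz1 hz2 => ht z (Finset.mem_univ z) hz1 hz2⟩
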